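/- For every n ≥ 0 and all positive semidefinite P, Q ∈ ℝ^{d×d}: Φ_n(P) − Φ_n(Q) = 𝓔_n(P) (P − Q) 𝓔_n(Q)ᵀ. -/

import Mathlib

open Matrix

noncomputable section

/-- The Riccati map `Φ(P) := A (I + P S)⁻¹ P Aᵀ + R`. -/
def Ricc {d : ℕ} (A S R P : Matrix (Fin d) (Fin d) ℝ) : Matrix (Fin d) (Fin d) ℝ :=
  A * (1 + P * S)⁻¹ * P * Aᵀ + R

/-- The map `𝓔(P) := A (I + P S)⁻¹`. -/
def Emat {d : ℕ} (A S P : Matrix (Fin d) (Fin d) ℝ) : Matrix (Fin d) (Fin d) ℝ :=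
  A * (1 + P * S)⁻¹

/-- The directed products `𝓔₀(P) := I`, `𝓔_{n+1}(P) := 𝓔_n(Φ(P)) 𝓔(P)`. -/
def Edir {d : ℕ} (A S R : Matrix (Fin d) (Fin d) ℝ) :
    ℕ → Matrix (Fin d) (Fin d) ℝ → Matrix (Fin d) (Fin d) ℝ
  | 0, _ => 1
  | n + 1, P => Edir A S R n (Ricc A S R P) * Emat A S P

lemma isUnit_one_add_mul' {d : ℕ} {P S : Matrix (Fin d) (Fin d) ℝ}
    (hP : P.PosSemidef) (hS : S.PosSemidef) : IsUnit (1 + P * S) := by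
  rw [← Matrix.mulVec_injective_iff_isUnit]
  have hker : ∀ u, (1 + P * S) *ᵥ u = 0 → u = 0 := by
    intro u hu
    have h1 : u + P *ᵥ (S *ᵥ u) = 0 := by
      simpa [Matrix.add_mulVec, Matrix.mulVec_mulVec] using hu
    have h2 : (u ⬝ᵥ S *ᵥ u) + ((S *ᵥ u) ⬝ᵥ P *ᵥ (S *ᵥ u)) = 0 := by
      have := congrArg (fun w => (S *ᵥ u) ⬝ᵥ w) h1
      simpa [dotProduct_add, dotProduct_comm] using this
    have hn1 : 0 ≤ u ⬝ᵥ S *ᵥ u := by simpa using hS.dotProduct_mulVec_nonneg u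
    have hn2 : 0 ≤ (S *ᵥ u) ⬝ᵥ P *ᵥ (S *ᵥ u) := by simpa using hP.dotProduct_mulVec_nonneg (S *ᵥ u)
    have hz : u ⬝ᵥ S *ᵥ u = 0 := le_antisymm (by linarith) hn1
    have hSu : S *ᵥ u = 0 := (hS.dotProduct_mulVec_zero_iff u).mp (by simpa using hz)
    rw [hSu] at h1
    simpa using h1
  intro x y hxy
  have h4 : (1 + P * S) *ᵥ (x - y) = 0 := by
    rw [Matrix.mulVec_sub, hxy, sub_self]
  exact sub_eq_zero.mp (hker _ h4)

lemma ricc_posSemidef {d : ℕ} {A S R P : Matrix (Fin d) (Fin d) ℝ}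
    (hR : R.PosDef) (hS : S.PosSemidef) (hP : P.PosSemidef) :
    (Ricc A S R P).PosSemidef := by
  have hU : IsUnit (1 + P * S) := isUnit_one_add_mul' hP hS
  have hUdet : IsUnit (1 + P * S).det := (Matrix.isUnit_iff_isUnit_det _).mp hU
  -- (1+PS)⁻¹ * P = (1+PS)⁻¹ * (P + P*S*P) * ((1+PS)⁻¹)ᵀ
  have hPT : Pᵀ = P := hP.isHermitian.eq ▸ by
    simp [← Matrix.conjTranspose_eq_transpose_of_trivial, hP.isHermitian.eq]
  have hST : Sᵀ = S := by
    simpa [← Matrix.conjTranspose_eq_transpose_of_trivial] using hS.isHermitian.eq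
  have hM : (1 + P * S)⁻¹ * P
      = (1 + P * S)⁻¹ * (P + P * S * P) * ((1 + P * S)⁻¹)ᴴ := by
    rw [Matrix.conjTranspose_eq_transpose_of_trivial, Matrix.transpose_nonsing_inv]
    have ht : (1 + P * S)ᵀ = 1 + S * P := by
      simp [Matrix.transpose_add, Matrix.transpose_mul, hPT, hST]
    rw [ht]
    have hVdet : IsUnit (1 + S * P).det := by
      have := Matrix.isUnit_det_transpose _ hUdet
      simpa [ht] using (Matrix.isUnit_det_transpose _ hUdet)
    have key : P + P * S * P = P * (1 + S * P) := by noncomm_ring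
    rw [key, Matrix.mul_assoc, Matrix.mul_assoc, Matrix.mul_nonsing_inv _ hVdet, Matrix.mul_one]
  have hPSP : (P + P * S * P).PosSemidef := by
    have h1 : (P * S * P).PosSemidef := by
      have := hS.mul_mul_conjTranspose_same P
      simpa [Matrix.conjTranspose_eq_transpose_of_trivial, hPT, Matrix.mul_assoc] using this
    exact hP.add h1
  have hMps : ((1 + P * S)⁻¹ * P).PosSemidef := by
    rw [hM]
    exact hPSP.mul_mul_conjTranspose_same _
  have hfin : (A * ((1 + P * S)⁻¹ * P) * Aᴴ).PosSemidef := hMps.mul_mul_conjTranspose_same A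
  have : (A * (1 + P * S)⁻¹ * P * Aᵀ).PosSemidef := by
    simpa [Matrix.conjTranspose_eq_transpose_of_trivial, Matrix.mul_assoc] using hfin
  exact this.add hR.posSemidef

lemma ricc_step {d : ℕ} {A S R P Q : Matrix (Fin d) (Fin d) ℝ}
    (hS : S.PosSemidef) (hP : P.PosSemidef) (hQ : Q.PosSemidef) :
    Ricc A S R P - Ricc A S R Q = Emat A S P * (P - Q) * (Emat A S Q)ᵀ := by
  have hPT : Pᵀ = P := by
    simpa [← Matrix.conjTranspose_eq_transpose_of_trivial] using hP.isHermitian.eq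
  have hQT : Qᵀ = Q := by
    simpa [← Matrix.conjTranspose_eq_transpose_of_trivial] using hQ.isHermitian.eq
  have hST : Sᵀ = S := by
    simpa [← Matrix.conjTranspose_eq_transpose_of_trivial] using hS.isHermitian.eq
  have hUdet : IsUnit (1 + P * S).det :=
    (Matrix.isUnit_iff_isUnit_det _).mp (isUnit_one_add_mul' hP hS)
  have hWdet : IsUnit (1 + Q * S).det :=
    (Matrix.isUnit_iff_isUnit_det _).mp (isUnit_one_add_mul' hQ hS)
  have htW : (1 + Q * S)ᵀ = 1 + S * Q := by
    simp [Matrix.transpose_add, Matrix.transpose_mul, hQT, hST]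
  have hVdet : IsUnit (1 + S * Q).det := by
    simpa [htW] using Matrix.isUnit_det_transpose _ hWdet
  -- main algebraic identity
  have key : (1 + P * S)⁻¹ * P - (1 + Q * S)⁻¹ * Q
      = (1 + P * S)⁻¹ * (P - Q) * (1 + S * Q)⁻¹ := by
    have e0 : P - Q = P * (1 + S * Q) - (1 + P * S) * Q := by noncomm_ring
    rw [e0]
    have e1 : (1 + P * S)⁻¹ * (P * (1 + S * Q) - (1 + P * S) * Q) * (1 + S * Q)⁻¹
        = (1 + P * S)⁻¹ * (P * ((1 + S * Q) * (1 + S * Q)⁻¹))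
          - ((1 + P * S)⁻¹ * (1 + P * S)) * (Q * (1 + S * Q)⁻¹) := by
      noncomm_ring
    rw [e1, Matrix.mul_nonsing_inv _ hVdet, Matrix.nonsing_inv_mul _ hUdet,
      Matrix.mul_one, Matrix.one_mul]
    congr 1
    -- (1 + Q * S)⁻¹ * Q = Q * (1 + S * Q)⁻¹
    have hcomm : Q * (1 + S * Q) = (1 + Q * S) * Q := by noncomm_ring
    have h5 : (1 + Q * S)⁻¹ * (Q * (1 + S * Q)) * (1 + S * Q)⁻¹
        = (1 + Q * S)⁻¹ * ((1 + Q * S) * Q) * (1 + S * Q)⁻¹ := by rw [hcomm]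
    simp only [← Matrix.mul_assoc] at h5
    rw [Matrix.mul_assoc _ (1 + S * Q) (1 + S * Q)⁻¹, Matrix.mul_nonsing_inv _ hVdet,
      Matrix.mul_one, Matrix.nonsing_inv_mul _ hWdet, Matrix.one_mul] at h5
    exact h5
  have hEQ : (Emat A S Q)ᵀ = (1 + S * Q)⁻¹ * Aᵀ := by
    rw [Emat, Matrix.transpose_mul, Matrix.transpose_nonsing_inv, htW]
  rw [Ricc, Ricc, Emat, hEQ]
  have expand : A * (1 + P * S)⁻¹ * P * Aᵀ + R - (A * (1 + Q * S)⁻¹ * Q * Aᵀ + R)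
      = A * ((1 + P * S)⁻¹ * P - (1 + Q * S)⁻¹ * Q) * Aᵀ := by noncomm_ring
  rw [expand, key]
  noncomm_ring

theorem statement6 {d d₀ : ℕ} (hd : 1 ≤ d) (hd₀ : 1 ≤ d₀)
    (A : Matrix (Fin d) (Fin d) ℝ) (B : Matrix (Fin d₀) (Fin d) ℝ)
    (R : Matrix (Fin d) (Fin d) ℝ) (R₀ : Matrix (Fin d₀) (Fin d₀) ℝ)
    (hR : R.PosDef) (hR₀ : R₀.PosDef)
    (S : Matrix (Fin d) (Fin d) ℝ) (hSdef : S = Bᵀ * R₀⁻¹ * B)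
    (n : ℕ) (P Q : Matrix (Fin d) (Fin d) ℝ) (hP : P.PosSemidef) (hQ : Q.PosSemidef) :
    (Ricc A S R)^[n] P - (Ricc A S R)^[n] Q =
      Edir A S R n P * (P - Q) * (Edir A S R n Q)ᵀ := by
  have hS : S.PosSemidef := by
    rw [hSdef]
    have h0 : (R₀⁻¹).PosSemidef := hR₀.posSemidef.inv
    have := h0.conjTranspose_mul_mul_same B
    simpa [Matrix.conjTranspose_eq_transpose_of_trivial] using this
  induction n generalizing P Q with
  | zero => simp [Edir]
  | succ n ih =>
    rw [Function.iterate_succ_apply, Function.iterate_succ_apply]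
    have hRP : (Ricc A S R P).PosSemidef := ricc_posSemidef hR hS hP
    have hRQ : (Ricc A S R Q).PosSemidef := ricc_posSemidef hR hS hQ
    rw [ih _ _ hRP hRQ, ricc_step hS hP hQ]
    show _ = Edir A S R (n+1) P * (P - Q) * (Edir A S R (n+1) Q)ᵀ
    rw [Edir, Edir, Matrix.transpose_mul]
    noncomm_ring
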